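/- Let 0 < p < ∞ and Ψ ∈ 𝓛. Then the function Θ(x) = x^p·Ψ(x) is essentially increasing on [0,∞): there exists C = C(Ψ, p) > 0 such that x^p·Ψ(x) ≤ C·y^p·Ψ(y) whenever 0 ≤ x ≤ y. -/

import Mathlib

open MeasureTheory Real Set

/-- `Ψ` is essentially increasing on `[0,∞)`. -/
def EssInc (Ψ : ℝ → ℝ) : Prop := ∃ C > (0:ℝ), ∀ x y : ℝ, 0 ≤ x → x ≤ y → Ψ x ≤ C * Ψ y

/-- `Ψ` is essentially decreasing on `[0,∞)`. -/
def EssDec (Ψ : ℝ → ℝ) : Prop := ∃ C > (0:ℝ), ∀ x y : ℝ, 0 ≤ x → x ≤ y → Ψ y ≤ C * Ψ x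

/-- The doubling property `Ψ(x) ≍ Ψ(x²)` on `[0,∞)`. -/
def Doubling (Ψ : ℝ → ℝ) : Prop :=
  ∃ c > (0:ℝ), ∃ C > (0:ℝ), ∀ x : ℝ, 0 ≤ x → c * Ψ (x ^ 2) ≤ Ψ x ∧ Ψ x ≤ C * Ψ (x ^ 2)

/-- The class `𝓛`: positive, essentially monotonic, doubling. -/
def InL (Ψ : ℝ → ℝ) : Prop :=
  (∀ x : ℝ, 0 ≤ x → 0 < Ψ x) ∧ (EssInc Ψ ∨ EssDec Ψ) ∧ Doubling Ψ

/-- Arithmetic auxiliary: `M*(m+1)+1 ≤ 2^m` once `m ≥ M² + M`. -/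
lemma aux_nat_ineq (M m : ℕ) (h : M ^ 2 + M ≤ m) : M * (m + 1) + 1 ≤ 2 ^ m := by
  have hMm : M ≤ m := by nlinarith
  obtain ⟨k, rfl⟩ : ∃ k, m = M + k := ⟨m - M, by omega⟩
  have hk : M ^ 2 ≤ k := by nlinarith
  have h1 : M + 1 ≤ 2 ^ M := Nat.lt_two_pow_self (n := M)
  have h2 : k + 1 ≤ 2 ^ k := Nat.lt_two_pow_self (n := k)
  calc M * (M + k + 1) + 1 ≤ (M + 1) * (k + 1) := by nlinarith
    _ ≤ 2 ^ M * 2 ^ k := Nat.mul_le_mul h1 h2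
    _ = 2 ^ (M + k) := (pow_add 2 M k).symm

/-- The sequence `C^(m+1) / r^(2^m - 1)` is bounded when `r > 1`. -/
lemma aux_seq_bound (C r : ℝ) (hC : 1 ≤ C) (hr : 1 < r) :
    ∃ K : ℝ, 1 ≤ K ∧ ∀ m : ℕ, C ^ (m + 1) ≤ K * r ^ (2 ^ m - 1) := by
  obtain ⟨M, hM⟩ := pow_unbounded_of_one_lt C hr
  have hC0 : (0:ℝ) ≤ C := le_trans zero_le_one hC
  have hr1 : (1:ℝ) ≤ r := hr.le
  refine ⟨C ^ (M ^ 2 + M + 1), one_le_pow₀ hC, fun m => ?_⟩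
  by_cases hm : m ≤ M ^ 2 + M
  · have h1 : C ^ (m + 1) ≤ C ^ (M ^ 2 + M + 1) := pow_le_pow_right₀ hC (by omega)
    have h2 : (1:ℝ) ≤ r ^ (2 ^ m - 1) := one_le_pow₀ hr1
    calc C ^ (m + 1) ≤ C ^ (M ^ 2 + M + 1) * 1 := by linarith
      _ ≤ C ^ (M ^ 2 + M + 1) * r ^ (2 ^ m - 1) := by
          apply mul_le_mul_of_nonneg_left h2 (pow_nonneg hC0 _)
  · push_neg at hm
    have hmm : M * (m + 1) + 1 ≤ 2 ^ m := aux_nat_ineq M m (by omega)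
    have h1 : C ^ (m + 1) ≤ (r ^ M) ^ (m + 1) := pow_le_pow_left₀ hC0 hM.le _
    have h2 : (r ^ M) ^ (m + 1) = r ^ (M * (m + 1)) := (pow_mul r M (m+1)).symm
    have h3 : r ^ (M * (m + 1)) ≤ r ^ (2 ^ m - 1) := pow_le_pow_right₀ hr1 (by omega)
    have h4 : (1:ℝ) ≤ C ^ (M ^ 2 + M + 1) := one_le_pow₀ hC
    have h5 : (0:ℝ) ≤ r ^ (2 ^ m - 1) := by positivity
    calc C ^ (m + 1) ≤ r ^ (2 ^ m - 1) := by rw [h2] at h1; linarith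
      _ ≤ C ^ (M ^ 2 + M + 1) * r ^ (2 ^ m - 1) := le_mul_of_one_le_left h5 h4

/-- Iterated doubling: `Ψ t ≤ C^n * Ψ (t^(2^n))`. -/
lemma aux_iter (Ψ : ℝ → ℝ) (C : ℝ) (hC : 0 < C)
    (h : ∀ x : ℝ, 0 ≤ x → Ψ x ≤ C * Ψ (x ^ 2)) :
    ∀ n : ℕ, ∀ t : ℝ, 0 ≤ t → Ψ t ≤ C ^ n * Ψ (t ^ (2 ^ n)) := by
  intro n
  induction n with
  | zero => intro t ht; simp
  | succ n ih =>
    intro t ht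
    have h1 := ih t ht
    have h2 := h (t ^ (2 ^ n)) (pow_nonneg ht _)
    have h3 : (t ^ (2 ^ n)) ^ 2 = t ^ (2 ^ (n + 1)) := by
      rw [← pow_mul]; ring_nf
    rw [h3] at h2
    calc Ψ t ≤ C ^ n * Ψ (t ^ 2 ^ n) := h1
      _ ≤ C ^ n * (C * Ψ (t ^ 2 ^ (n+1))) := by
          apply mul_le_mul_of_nonneg_left h2 (pow_nonneg hC.le _)
      _ = C ^ (n + 1) * Ψ (t ^ 2 ^ (n+1)) := by ring

/-- Key lemma for the essentially decreasing case: on `[2,∞)`, `x^p Ψ x` is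
essentially increasing. -/
lemma aux_key (Ψ : ℝ → ℝ) (p C D : ℝ) (hp : 0 < p) (hC : 1 ≤ C) (hD : 1 ≤ D)
    (hpos : ∀ x : ℝ, 0 ≤ x → 0 < Ψ x)
    (hdouble : ∀ x : ℝ, 0 ≤ x → Ψ x ≤ C * Ψ (x ^ 2))
    (hdec : ∀ x y : ℝ, 0 ≤ x → x ≤ y → Ψ y ≤ D * Ψ x) :
    ∃ K > (0:ℝ), ∀ x y : ℝ, 2 ≤ x → x ≤ y → x ^ p * Ψ x ≤ K * (y ^ p * Ψ y) := by
  have hr : 1 < (2:ℝ) ^ p := Real.one_lt_rpow_iff (by norm_num) |>.mpr (by norm_num [hp])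
  obtain ⟨K₀, hK₀1, hK₀⟩ := aux_seq_bound C ((2:ℝ) ^ p) hC hr
  refine ⟨D * K₀, by positivity, fun x y hx hxy => ?_⟩
  have hx0 : (0:ℝ) ≤ x := by linarith
  have hy0 : (0:ℝ) ≤ y := by linarith
  have hx1 : (1:ℝ) ≤ x := by linarith
  have hΨy : 0 < Ψ y := hpos y hy0
  have hxp : (0:ℝ) ≤ x ^ p := Real.rpow_nonneg hx0 p
  -- find minimal n with y ≤ x ^ (2 ^ n)
  have hex : ∃ n : ℕ, y ≤ x ^ (2 ^ n) := by
    obtain ⟨n, hn⟩ := pow_unbounded_of_one_lt y (show (1:ℝ) < x by linarith)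
    exact ⟨n, hn.le.trans (pow_le_pow_right₀ hx1 (Nat.lt_two_pow_self (n := n)).le)⟩
  classical
  obtain ⟨n, h1, h2min⟩ : ∃ n : ℕ, y ≤ x ^ (2 ^ n) ∧ ∀ m, m < n → x ^ (2 ^ m) < y := by
    refine ⟨Nat.find hex, Nat.find_spec hex, fun m hm => ?_⟩
    have := Nat.find_min hex hm
    push_neg at this
    exact this
  -- chain of inequalities
  have hchain : Ψ x ≤ C ^ n * D * Ψ y := by
    have ha := aux_iter Ψ C (by linarith) hdouble n x hx0
    have hb := hdec y (x ^ (2 ^ n)) hy0 h1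
    calc Ψ x ≤ C ^ n * Ψ (x ^ 2 ^ n) := ha
      _ ≤ C ^ n * (D * Ψ y) := mul_le_mul_of_nonneg_left hb (by positivity)
      _ = C ^ n * D * Ψ y := by ring
  rcases Nat.eq_zero_or_pos n with h0 | hpos'
  · -- n = 0 : then y ≤ x so x = y
    rw [h0] at h1
    simp only [pow_zero, pow_one] at h1
    have hxy' : x = y := le_antisymm hxy h1
    subst hxy'
    have : (1:ℝ) ≤ D * K₀ := one_le_mul_of_one_le_of_one_le hD hK₀1
    nlinarith [mul_pos (Real.rpow_pos_of_pos (show (0:ℝ) < x by linarith) p) (hpos x hx0)]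
  · -- n = m + 1
    obtain ⟨m, rfl⟩ : ∃ m, n = m + 1 := ⟨n - 1, by omega⟩
    have h2 : x ^ (2 ^ m) < y := h2min m (by omega)
    -- y^p ≥ (x^(2^m))^p = (x^k)^p * x^p  with k = 2^m - 1
    set k : ℕ := 2 ^ m - 1 with hk_def
    have hkk : 2 ^ m = k + 1 := by
      have : 1 ≤ 2 ^ m := Nat.one_le_two_pow
      omega
    have hsplit : x ^ (2 ^ m) = x ^ k * x := by rw [hkk, pow_succ]
    have hyp : (x ^ k) ^ p * x ^ p ≤ y ^ p := by
      have := Real.rpow_le_rpow (by positivity) h2.le hp.le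
      rwa [hsplit, Real.mul_rpow (by positivity) hx0] at this
    -- (x^k)^p ≥ (2^p)^k
    have hxk : ((2:ℝ) ^ p) ^ k ≤ (x ^ k) ^ p := by
      have e1 : ((2:ℝ) ^ p) ^ k = ((2:ℝ) ^ k) ^ p := by
        rw [← Real.rpow_natCast ((2:ℝ)^p) k, ← Real.rpow_natCast (2:ℝ) k,
          ← Real.rpow_mul (by norm_num), ← Real.rpow_mul (by norm_num), mul_comm]
      rw [e1]
      exact Real.rpow_le_rpow (by positivity) (pow_le_pow_left₀ (by norm_num) hx k) hp.le
    -- now assemble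
    have hCm : C ^ (m + 1) ≤ K₀ * ((2:ℝ) ^ p) ^ k := hK₀ m
    have hmain : x ^ p * (C ^ (m + 1) * D) ≤ D * K₀ * y ^ p := by
      have h5 : x ^ p * (C ^ (m + 1) * D) ≤ x ^ p * (K₀ * ((2:ℝ) ^ p) ^ k * D) := by
        apply mul_le_mul_of_nonneg_left _ hxp
        apply mul_le_mul_of_nonneg_right hCm (by linarith)
      have h6 : x ^ p * (K₀ * ((2:ℝ) ^ p) ^ k * D) = D * K₀ * (((2:ℝ) ^ p) ^ k * x ^ p) := by
        ring
      have h7 : ((2:ℝ) ^ p) ^ k * x ^ p ≤ (x ^ k) ^ p * x ^ p := by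
        apply mul_le_mul_of_nonneg_right hxk hxp
      have h8 : D * K₀ * (((2:ℝ) ^ p) ^ k * x ^ p) ≤ D * K₀ * ((x ^ k) ^ p * x ^ p) := by
        apply mul_le_mul_of_nonneg_left h7 (by positivity)
      have h9 : D * K₀ * ((x ^ k) ^ p * x ^ p) ≤ D * K₀ * y ^ p := by
        apply mul_le_mul_of_nonneg_left hyp (by positivity)
      linarith [h5, h8, h9, h6.le, h6.ge]
    calc x ^ p * Ψ x ≤ x ^ p * (C ^ (m + 1) * D * Ψ y) :=
          mul_le_mul_of_nonneg_left hchain hxp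
      _ = x ^ p * (C ^ (m + 1) * D) * Ψ y := by ring
      _ ≤ D * K₀ * y ^ p * Ψ y := mul_le_mul_of_nonneg_right hmain hΨy.le
      _ = D * K₀ * (y ^ p * Ψ y) := by ring

theorem stmt5 (p : ℝ) (hp : 0 < p) (Ψ : ℝ → ℝ) (hΨ : InL Ψ) :
    ∃ C > (0:ℝ), ∀ x y : ℝ, 0 ≤ x → x ≤ y →
      x ^ p * Ψ x ≤ C * (y ^ p * Ψ y) := by
  obtain ⟨hpos, hmono, c, hc, C, hC, hdbl⟩ := hΨ
  have hΨ1 : 0 < Ψ 1 := hpos 1 zero_le_one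
  have hC1 : (1:ℝ) ≤ C := by
    have := (hdbl 1 zero_le_one).2
    norm_num at this
    exact (le_mul_iff_one_le_left hΨ1).mp this
  rcases hmono with ⟨A, hA, hinc⟩ | ⟨D, hD, hdec⟩
  · -- essentially increasing: trivial
    refine ⟨A, hA, fun x y hx hxy => ?_⟩
    have hy : (0:ℝ) ≤ y := le_trans hx hxy
    calc x ^ p * Ψ x ≤ x ^ p * (A * Ψ y) :=
          mul_le_mul_of_nonneg_left (hinc x y hx hxy) (Real.rpow_nonneg hx p)
      _ ≤ y ^ p * (A * Ψ y) := by
          exact mul_le_mul_of_nonneg_right (Real.rpow_le_rpow hx hxy hp.le)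
            (mul_nonneg hA.le (hpos y hy).le)
      _ = A * (y ^ p * Ψ y) := by ring
  · -- essentially decreasing
    have hD1 : (1:ℝ) ≤ D := by
      have := hdec 1 1 zero_le_one le_rfl
      exact (le_mul_iff_one_le_left hΨ1).mp this
    have hdouble : ∀ x : ℝ, 0 ≤ x → Ψ x ≤ C * Ψ (x ^ 2) := fun x hx => (hdbl x hx).2
    obtain ⟨K, hK, hkey⟩ := aux_key Ψ p C D hp hC1 hD1 hpos hdouble hdec
    have hΨ0 : 0 < Ψ 0 := hpos 0 le_rfl
    have hΨ2 : 0 < Ψ 2 := hpos 2 (by norm_num)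
    -- Ψ t ≤ D * Ψ 0 for all t ≥ 0
    have hbd : ∀ t : ℝ, 0 ≤ t → Ψ t ≤ D * Ψ 0 := fun t ht => hdec 0 t le_rfl ht
    -- Ψ 2 ≤ D * Ψ t for t ≤ 2
    have hlow : ∀ t : ℝ, 0 ≤ t → t ≤ 2 → Ψ 2 ≤ D * Ψ t := fun t ht ht2 => hdec t 2 ht ht2
    set KA : ℝ := D ^ 2 * Ψ 0 / Ψ 2 with hKA
    set KB : ℝ := D * Ψ 0 / Ψ 2 * K with hKB
    have hD0 : (0:ℝ) < D := hD
    have hKA0 : 0 < KA := by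
      rw [hKA]; exact div_pos (mul_pos (pow_pos hD0 2) hΨ0) hΨ2
    have hKB0 : 0 < KB := by
      rw [hKB]; exact mul_pos (div_pos (mul_pos hD0 hΨ0) hΨ2) hK
    refine ⟨KA + KB + K, by linarith, fun x y hx hxy => ?_⟩
    have hy : (0:ℝ) ≤ y := le_trans hx hxy
    have hΨy : 0 < Ψ y := hpos y hy
    have hΨx : 0 < Ψ x := hpos x hx
    have hyp0 : (0:ℝ) ≤ y ^ p * Ψ y := by positivity
    have hxp : (0:ℝ) ≤ x ^ p := Real.rpow_nonneg hx p
    rcases le_or_gt 2 x with hx2 | hx2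
    · -- case C : 2 ≤ x
      have := hkey x y hx2 hxy
      nlinarith
    · rcases le_or_gt y 2 with hy2 | hy2
      · -- case A : x < 2, y ≤ 2
        have h1 : x ^ p * Ψ x ≤ x ^ p * (D * Ψ 0) :=
          mul_le_mul_of_nonneg_left (hbd x hx) hxp
        have h2 : x ^ p * (D * Ψ 0) ≤ y ^ p * (D * Ψ 0) := by
          exact mul_le_mul_of_nonneg_right (Real.rpow_le_rpow hx hxy hp.le)
            (mul_nonneg hD.le hΨ0.le)
        have h3 : Ψ 2 ≤ D * Ψ y := hlow y hy hy2
        -- y^p * (D * Ψ 0) ≤ KA * (y^p * Ψ y)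
        have h4 : y ^ p * (D * Ψ 0) ≤ KA * (y ^ p * Ψ y) := by
          rw [hKA]
          have hyp : (0:ℝ) ≤ y ^ p := Real.rpow_nonneg hy p
          rw [div_mul_eq_mul_div, le_div_iff₀ hΨ2]
          nlinarith [mul_le_mul_of_nonneg_left h3 (mul_nonneg (mul_nonneg hyp hD.le) hΨ0.le)]
        have hrest : 0 ≤ (KB + K) * (y ^ p * Ψ y) := by positivity
        nlinarith
      · -- case B : x < 2 < y
        have h1 : x ^ p * Ψ x ≤ x ^ p * (D * Ψ 0) :=
          mul_le_mul_of_nonneg_left (hbd x hx) hxp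
        have h2 : x ^ p * (D * Ψ 0) ≤ (2:ℝ) ^ p * (D * Ψ 0) := by
          apply mul_le_mul_of_nonneg_right
            (Real.rpow_le_rpow hx (by linarith) hp.le)
          positivity
        have h3 : (2:ℝ) ^ p * Ψ 2 ≤ K * (y ^ p * Ψ y) := hkey 2 y le_rfl hy2.le
        -- 2^p * (D * Ψ 0) = (D * Ψ 0 / Ψ 2) * (2^p * Ψ 2)
        have h4 : (2:ℝ) ^ p * (D * Ψ 0) = D * Ψ 0 / Ψ 2 * ((2:ℝ) ^ p * Ψ 2) := by
          field_simp
        have h5 : D * Ψ 0 / Ψ 2 * ((2:ℝ) ^ p * Ψ 2) ≤ D * Ψ 0 / Ψ 2 * (K * (y ^ p * Ψ y)) := by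
          apply mul_le_mul_of_nonneg_left h3; positivity
        have hrest : 0 ≤ (KA + K) * (y ^ p * Ψ y) := by positivity
        have h6 : D * Ψ 0 / Ψ 2 * (K * (y ^ p * Ψ y)) = KB * (y ^ p * Ψ y) := by
          rw [hKB]; ring
        nlinarith
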